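/- Let X be a real reflexive Banach space and let C ⊆ X be a closed convex cone. If the positive dual cone C* has nonempty interior, then int C* = C^{*s}, where C^{*s} := {w ∈ X* : ⟨w,x⟩ > 0 for all x ∈ C ∖ {0}} is the cone of strictly positive functionals on C. -/

import Mathlib

set_option maxHeartbeats 1000000
set_option synthInstance.maxHeartbeats 200000

open NormedSpace Metric Set

/-- Characterization of interior points of the dual cone: `w ∈ int C*` iff `w` is uniformly
positive on `C`. -/
lemma aux_int_char {X : Type*} [NormedAddCommGroup X] [NormedSpace ℝ X]
    (C : Set X) (Cstar : Set (X →L[ℝ] ℝ))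
    (hCstar : Cstar = {w : X →L[ℝ] ℝ | ∀ x ∈ C, 0 ≤ w x}) (w : X →L[ℝ] ℝ) :
    w ∈ interior Cstar ↔ ∃ δ > 0, ∀ x ∈ C, δ * ‖x‖ ≤ w x := by
  constructor
  · intro hw
    obtain ⟨ε, hε, hball⟩ := Metric.mem_nhds_iff.mp (mem_interior_iff_mem_nhds.mp hw)
    refine ⟨ε / 2, by positivity, fun x hx => ?_⟩
    rcases eq_or_ne x 0 with rfl | hx0
    · simp
    obtain ⟨g, hg1, hgx⟩ := exists_dual_vector ℝ x (norm_ne_zero_iff.mpr hx0)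
    have hu : w - (ε / 2) • g ∈ Cstar := by
      apply hball
      have hle : ‖w - (ε / 2) • g - w‖ ≤ ε / 2 := by
        rw [sub_sub_cancel_left, norm_neg]
        refine le_trans (ContinuousLinearMap.opNorm_smul_le _ _) ?_
        rw [hg1, mul_one, Real.norm_eq_abs, abs_of_pos (by positivity : (0:ℝ) < ε / 2)]
      rw [Metric.mem_ball, dist_eq_norm]
      linarith
    rw [hCstar] at hu
    have h1 := hu x hx
    have h2 : (w - (ε / 2) • g) x = w x - (ε / 2) * ‖x‖ := by
      simp [hgx, smul_eq_mul]
    rw [h2] at h1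
    linarith
  · rintro ⟨δ, hδ, h⟩
    rw [mem_interior_iff_mem_nhds, Metric.mem_nhds_iff]
    refine ⟨δ, hδ, fun u hu => ?_⟩
    rw [hCstar]
    intro x hx
    have h1 : ‖u - w‖ < δ := by rwa [Metric.mem_ball, dist_eq_norm] at hu
    have h2 : ‖(u - w) x‖ ≤ ‖u - w‖ * ‖x‖ := (u - w).le_opNorm x
    have h3 : (u - w) x = u x - w x := rfl
    have h4 := h x hx
    have h5 := abs_le.mp (by rwa [Real.norm_eq_abs] at h2)
    have h6 : ‖u - w‖ * ‖x‖ ≤ δ * ‖x‖ := by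
      exact mul_le_mul_of_nonneg_right h1.le (norm_nonneg x)
    rw [h3] at h5
    linarith [h5.1]

/-- Lemma 3.4, Casini–Miglierina: if X is a real reflexive Banach space
and C ⊆ X a closed convex cone whose positive dual cone C* has nonempty interior,
then int C* = C^{*s}, the set of strictly positive functionals on C. -/
theorem stmt5
    {X : Type*} [NormedAddCommGroup X] [NormedSpace ℝ X] [CompleteSpace X]
    -- reflexivity of X
    (hXrefl : Function.Surjective (NormedSpace.inclusionInDoubleDual ℝ X))
    -- closed convex cone C
    (C : Set X)
    (hCcone : ∀ (r : ℝ), 0 ≤ r → ∀ x ∈ C, r • x ∈ C) (hCconv : Convex ℝ C)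
    (hCclosed : IsClosed C)
    -- positive dual cone and strictly positive dual cone
    (Cstar : Set (X →L[ℝ] ℝ)) (hCstar : Cstar = {w : X →L[ℝ] ℝ | ∀ x ∈ C, 0 ≤ w x})
    (Cstrict : Set (X →L[ℝ] ℝ))
    (hCstrict : Cstrict = {w : X →L[ℝ] ℝ | ∀ x ∈ C, x ≠ 0 → 0 < w x})
    (hint : (interior Cstar).Nonempty) :
    interior Cstar = Cstrict := by
  have hchar : ∀ w : X →L[ℝ] ℝ, w ∈ interior Cstar ↔ ∃ δ > 0, ∀ x ∈ C, δ * ‖x‖ ≤ w x :=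
    fun w => aux_int_char C Cstar hCstar w
  apply Set.eq_of_subset_of_subset
  · intro w hw
    obtain ⟨δ, hδ, h⟩ := (hchar w).mp hw
    rw [hCstrict]
    intro x hx hx0
    have h1 := h x hx
    have h2 : 0 < ‖x‖ := norm_pos_iff.mpr hx0
    nlinarith
  · intro w hw
    rw [hCstrict] at hw
    apply (hchar w).mpr
    by_cases hC0 : ∀ x ∈ C, x = 0
    · exact ⟨1, one_pos, fun x hx => by simp [hC0 x hx]⟩
    push_neg at hC0
    obtain ⟨z, hzC, hz0⟩ := hC0
    obtain ⟨w0, hw0int⟩ := hint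
    obtain ⟨δ0, hδ0, hw0⟩ := (hchar w0).mp hw0int
    -- the base K of the cone
    set K : Set X := C ∩ {x | w0 x = 1} with hKdef
    have hKconv : Convex ℝ K :=
      hCconv.inter (convex_hyperplane (IsLinearMap.mk w0.map_add w0.map_smul) 1)
    have hKclosed : IsClosed K :=
      hCclosed.inter (isClosed_singleton.preimage w0.continuous)
    have hw0pos : ∀ x ∈ C, x ≠ 0 → 0 < w0 x := fun x hx hx0 =>
      lt_of_lt_of_le (mul_pos hδ0 (norm_pos_iff.mpr hx0)) (hw0 x hx)
    have hmemK : ∀ x ∈ C, x ≠ 0 → (w0 x)⁻¹ • x ∈ K := by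
      intro x hx hx0
      have hpos := hw0pos x hx hx0
      refine ⟨hCcone _ (by positivity) x hx, ?_⟩
      simp only [Set.mem_setOf_eq, map_smul, smul_eq_mul]
      exact inv_mul_cancel₀ hpos.ne'
    have hKne : K.Nonempty := ⟨(w0 z)⁻¹ • z, hmemK z hzC hz0⟩
    -- embed into the weak-star bidual
    set J : X → WeakDual ℝ (StrongDual ℝ X) :=
      fun x => StrongDual.toWeakDual (inclusionInDoubleDual ℝ X x) with hJdef
    have hJapp : ∀ (x : X) (f : StrongDual ℝ X), J x f = f x := fun _ _ => rfl
    set S : Set (WeakDual ℝ (StrongDual ℝ X)) := J '' K with hSdef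
    have hSclosed : IsClosed S := by
      apply isClosed_of_closure_subset
      intro Φ hΦ
      obtain ⟨x, hx⟩ := hXrefl (WeakDual.toStrongDual Φ)
      have hΦx : ∀ f : StrongDual ℝ X, Φ f = f x := by
        intro f
        have := DFunLike.congr_fun hx f
        exact this.symm
      have hxK : x ∈ K := by
        by_contra hxK
        obtain ⟨f, u, hfu, hux⟩ := geometric_hahn_banach_closed_point hKconv hKclosed hxK
        have hopen : IsOpen {Ψ : WeakDual ℝ (StrongDual ℝ X) | u < Ψ f} :=
          isOpen_lt continuous_const (WeakDual.eval_continuous f)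
        have hmem : Φ ∈ {Ψ : WeakDual ℝ (StrongDual ℝ X) | u < Ψ f} := by
          simpa [hΦx] using hux
        obtain ⟨Ψ, hΨ1, hΨ2⟩ := mem_closure_iff.mp hΦ _ hopen hmem
        obtain ⟨y, hyK, rfl⟩ := hΨ2
        have : u < f y := by simpa [hJapp] using hΨ1
        exact absurd (hfu y hyK) (not_lt.mpr this.le)
      refine ⟨x, hxK, ?_⟩
      apply DFunLike.ext
      intro f
      exact (hΦx f).symm
    have hSbdd : Bornology.IsBounded (StrongDual.toWeakDual ⁻¹' S) := by
      apply (Metric.isBounded_closedBall (x := (0 : StrongDual ℝ (StrongDual ℝ X))) (r := δ0⁻¹)).subset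
      rintro g hg
      obtain ⟨y, hyK, hyg⟩ := hg
      have hgy : g = inclusionInDoubleDual ℝ X y :=
        (StrongDual.toWeakDual.injective hyg).symm
      have hnorm : ‖g‖ = ‖y‖ := by
        rw [hgy]
        exact (inclusionInDoubleDualLi ℝ (E := X)).norm_map y
      have hy1 : δ0 * ‖y‖ ≤ 1 := by
        have := hw0 y hyK.1
        rw [hyK.2] at this
        exact this
      have : ‖y‖ ≤ δ0⁻¹ := by
        rw [← one_div]
        exact (le_div_iff₀ hδ0).mpr (by linarith [hy1, mul_comm δ0 ‖y‖])
      rw [mem_closedBall]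
      exact (dist_zero_right g).le.trans (hnorm.le.trans this)
    have hScpt : IsCompact S := WeakDual.isCompact_of_bounded_of_closed (WeakDual.isBounded_toWeakDual_preimage_iff_isBounded.mp hSbdd) hSclosed
    -- minimize `Φ ↦ Φ w` on `S`
    obtain ⟨Φ0, hΦ0S, hmin⟩ := hScpt.exists_isMinOn (hKne.image J)
      ((WeakDual.eval_continuous (𝕜 := ℝ) w).continuousOn)
    obtain ⟨x0, hx0K, rfl⟩ := hΦ0S
    have hx0ne : x0 ≠ 0 := by
      intro h
      have := hx0K.2
      rw [h] at this
      simp at this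
    have hα : 0 < w x0 := hw x0 hx0K.1 hx0ne
    refine ⟨w x0 * δ0, by positivity, fun x hx => ?_⟩
    rcases eq_or_ne x 0 with rfl | hx0'
    · simp
    have hw0x : 0 < w0 x := hw0pos x hx hx0'
    have hy : (w0 x)⁻¹ • x ∈ K := hmemK x hx hx0'
    have hminle := isMinOn_iff.mp hmin _ (Set.mem_image_of_mem J hy)
    have heval : J ((w0 x)⁻¹ • x) w = (w0 x)⁻¹ * w x := by
      simp [hJapp, map_smul, smul_eq_mul]
    rw [hJapp, heval] at hminle
    -- `w x0 ≤ (w0 x)⁻¹ * w x`, hence `w x ≥ w x0 * w0 x ≥ w x0 * δ0 * ‖x‖`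
    have h1 : w x0 * w0 x ≤ w x := by
      have := mul_le_mul_of_nonneg_right hminle hw0x.le
      rwa [inv_mul_eq_div, div_mul_cancel₀ _ hw0x.ne'] at this
    have h2 : δ0 * ‖x‖ ≤ w0 x := hw0 x hx
    nlinarith [hα, norm_nonneg x]
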